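/- The Catalan numbers are asymptotically equivalent to (1/√π)·n^{−3/2}·4^n, i.e., lim_{n→∞} c_n / ((1/√π) n^{−3/2} 4^n) = 1. -/

import Mathlib

open Filter Real
open scoped Nat

lemma stirling_ratio (n : ℕ) (hn : 1 ≤ n) :
    Stirling.stirlingSeq (2 * n) / (Stirling.stirlingSeq n) ^ 2
      = ((2 * n).choose n : ℝ) * Real.sqrt n / 4 ^ n := by
  have hn0 : (0:ℝ) < n := by exact_mod_cast hn
  have hfac : ((2 * n)! : ℝ) = ((2 * n).choose n : ℝ) * n ! * n ! := by
    have h := Nat.choose_mul_factorial_mul_factorial (show n ≤ 2 * n by omega)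
    rw [show 2 * n - n = n by omega] at h
    exact_mod_cast h.symm
  have h4 : Real.sqrt (2 * (2 * n) : ℝ) = 2 * Real.sqrt n := by
    rw [show (2 * (2 * n) : ℝ) = 4 * n by push_cast; ring, Real.sqrt_mul (by norm_num),
      show (4:ℝ) = 2 ^ 2 by norm_num, Real.sqrt_sq (by norm_num)]
  have h2 : (Real.sqrt (2 * n : ℝ)) ^ 2 = 2 * n := Real.sq_sqrt (by positivity)
  have hpow : ((2 * n : ℝ) / Real.exp 1) ^ (2 * n) = 4 ^ n * ((n : ℝ) / Real.exp 1) ^ (2 * n) := by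
    rw [mul_div_assoc, mul_pow, pow_mul]
    norm_num
  have hs : Real.sqrt n ≠ 0 := by positivity
  have he : Real.exp 1 ≠ 0 := (Real.exp_pos 1).ne'
  have hf : (n ! : ℝ) ≠ 0 := by positivity
  have hn' : (n : ℝ) ≠ 0 := hn0.ne'
  unfold Stirling.stirlingSeq
  push_cast
  have h2' : Real.sqrt (2 * (n:ℝ)) = Real.sqrt 2 * Real.sqrt n := Real.sqrt_mul (by norm_num) _
  have hs2 : Real.sqrt 2 ≠ 0 := by positivity
  rw [hfac, h4, h2', hpow]
  field_simp
  ring_nf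
  rw [Real.sq_sqrt (by norm_num : (0:ℝ) ≤ 2)]
  ring

/-- The `n`-th Catalan number `(2n choose n)/(n+1)`, as a real number. -/
noncomputable def catalanR (n : ℕ) : ℝ := (Nat.choose (2 * n) n : ℝ) / (n + 1)

theorem catalan_asymptotics :
    Tendsto
      (fun n : ℕ =>
        catalanR n / ((1 / Real.sqrt π) * (n : ℝ) ^ (-(3 : ℝ) / 2) * 4 ^ n))
      atTop (nhds 1) := by
  have hπ : (0:ℝ) < Real.sqrt π := Real.sqrt_pos.2 Real.pi_pos
  have h2n : Tendsto (fun n : ℕ => 2 * n) atTop atTop :=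
    tendsto_atTop_mono (fun n => Nat.le_mul_of_pos_left n (by norm_num)) tendsto_id
  have hA : Tendsto (fun n : ℕ => Stirling.stirlingSeq (2 * n)) atTop (nhds (Real.sqrt π)) :=
    Stirling.tendsto_stirlingSeq_sqrt_pi.comp h2n
  have hB : Tendsto (fun n : ℕ => (Stirling.stirlingSeq n) ^ 2) atTop
      (nhds ((Real.sqrt π) ^ 2)) := Stirling.tendsto_stirlingSeq_sqrt_pi.pow 2
  have hC := hA.div hB (by positivity)
  have hD : Tendsto (fun n : ℕ => (n : ℝ) / ((n : ℝ) + 1)) atTop (nhds 1) :=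
    tendsto_natCast_div_add_atTop (1 : ℝ)
  have hE := (hC.mul_const (Real.sqrt π)).mul hD
  rw [show Real.sqrt π / (Real.sqrt π) ^ 2 * Real.sqrt π * 1 = 1 by field_simp] at hE
  refine hE.congr' ?_
  filter_upwards [eventually_ge_atTop 1] with n hn
  have hn0 : (0:ℝ) < n := by exact_mod_cast hn
  have hr : (n : ℝ) ^ (-(3 : ℝ) / 2) = 1 / ((n : ℝ) * Real.sqrt n) := by
    rw [show (-(3:ℝ)/2) = -((3:ℝ)/2) by ring, Real.rpow_neg hn0.le,
      show ((3:ℝ)/2) = 1 + (1:ℝ)/2 by norm_num, Real.rpow_add hn0, Real.rpow_one,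
      ← Real.sqrt_eq_rpow, one_div]
  simp only [Pi.div_apply]
  rw [stirling_ratio n hn, hr]
  unfold catalanR
  have hs : Real.sqrt n ≠ 0 := by positivity
  have hn1 : (n : ℝ) + 1 ≠ 0 := by positivity
  field_simp
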